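/- For every α ∈ (0,1) there is a constant c = c(α) such that for all v, w ∈ ℝ: 𝔟_α[v,w] ≤ c·|v - w|^{1+α}. -/

import Mathlib

open Real Set

private lemma rpow_add_le' {x y p : ℝ} (hx : 0 ≤ x) (hy : 0 ≤ y) (hp : 0 ≤ p) (hp1 : p ≤ 1) :
    (x + y) ^ p ≤ x ^ p + y ^ p := by
  have h := NNReal.coe_le_coe.2 (NNReal.rpow_add_le_add_rpow x.toNNReal y.toNNReal hp hp1)
  simpa [NNReal.coe_rpow, Real.coe_toNNReal _ hx, Real.coe_toNNReal _ hy,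
    ← Real.toNNReal_add hx hy, Real.coe_toNNReal _ (add_nonneg hx hy)] using h

-- g x = |x|^(α-1) * x equals x^α for x ≥ 0
private lemma g_eq_nonneg {α x : ℝ} (hα0 : 0 < α) (hx : 0 ≤ x) :
    |x| ^ (α - 1) * x = x ^ α := by
  rcases eq_or_lt_of_le hx with rfl | hx
  · simp [Real.zero_rpow hα0.ne']
  · rw [abs_of_pos hx, ← Real.rpow_add_one hx.ne']
    ring_nf

private lemma g_eq_nonpos {α x : ℝ} (hα0 : 0 < α) (hx : x ≤ 0) :
    |x| ^ (α - 1) * x = -(-x) ^ α := by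
  rcases eq_or_lt_of_le hx with rfl | hx
  · simp [Real.zero_rpow hα0.ne']
  · rw [abs_of_neg hx]
    have : (-x) ^ (α - 1) * x = -((-x) ^ (α - 1) * (-x)) := by ring
    rw [this, ← Real.rpow_add_one (by linarith : (-x) ≠ 0)]
    ring_nf

-- g is monotone
private lemma g_mono {α : ℝ} (hα0 : 0 < α) {a b : ℝ} (hab : a ≤ b) :
    |a| ^ (α - 1) * a ≤ |b| ^ (α - 1) * b := by
  rcases le_or_gt 0 a with ha | ha
  · rw [g_eq_nonneg hα0 ha, g_eq_nonneg hα0 (ha.trans hab)]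
    exact Real.rpow_le_rpow ha hab hα0.le
  rcases le_or_gt 0 b with hb | hb
  · rw [g_eq_nonpos hα0 ha.le, g_eq_nonneg hα0 hb]
    have h1 : (0:ℝ) ≤ (-a) ^ α := Real.rpow_nonneg (by linarith) _
    have h2 : (0:ℝ) ≤ b ^ α := Real.rpow_nonneg hb _
    linarith
  · rw [g_eq_nonpos hα0 ha.le, g_eq_nonpos hα0 hb.le]
    have := Real.rpow_le_rpow (by linarith : (0:ℝ) ≤ -b) (by linarith : -b ≤ -a) hα0.le
    linarith

-- Hölder bound
private lemma g_holder {α : ℝ} (hα0 : 0 < α) (hα1 : α < 1) {a b : ℝ} (hab : b ≤ a) :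
    |a| ^ (α - 1) * a - |b| ^ (α - 1) * b ≤ 2 * (a - b) ^ α := by
  have hd : (0:ℝ) ≤ a - b := by linarith
  rcases le_or_gt 0 b with hb | hb
  · rw [g_eq_nonneg hα0 (hb.trans hab), g_eq_nonneg hα0 hb]
    have key : a ^ α ≤ (a - b) ^ α + b ^ α := by
      have := rpow_add_le' hd hb hα0.le hα1.le
      rwa [sub_add_cancel] at this
    have : (0:ℝ) ≤ (a - b) ^ α := Real.rpow_nonneg hd _
    linarith
  rcases le_or_gt 0 a with ha | ha
  · rw [g_eq_nonneg hα0 ha, g_eq_nonpos hα0 hb.le]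
    have h1 : a ^ α ≤ (a - b) ^ α := Real.rpow_le_rpow ha (by linarith) hα0.le
    have h2 : (-b) ^ α ≤ (a - b) ^ α := Real.rpow_le_rpow (by linarith) (by linarith) hα0.le
    linarith
  · rw [g_eq_nonpos hα0 ha.le, g_eq_nonpos hα0 hb.le]
    have key : (-b) ^ α ≤ (a - b) ^ α + (-a) ^ α := by
      have := rpow_add_le' hd (by linarith : (0:ℝ) ≤ -a) hα0.le hα1.le
      have e : a - b + -a = -b := by ring
      rwa [e] at this
    have : (0:ℝ) ≤ (a - b) ^ α := Real.rpow_nonneg hd _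
    linarith

-- derivative
private lemma F_deriv {α : ℝ} (hα0 : 0 < α) (x : ℝ) :
    HasDerivAt (fun t : ℝ => (1 / (α + 1)) * |t| ^ (α + 1)) (|x| ^ (α - 1) * x) x := by
  have hα1 : (0:ℝ) < α + 1 := by linarith
  rcases lt_trichotomy x 0 with hx | rfl | hx
  · have h : HasDerivAt (fun t : ℝ => (1 / (α + 1)) * (-t) ^ (α + 1))
        (|x| ^ (α - 1) * x) x := by
      have h1 : HasDerivAt (fun t : ℝ => (-t) ^ (α + 1))
          ((α + 1) * (-x) ^ (α + 1 - 1) * (-1)) x := by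
        exact (Real.hasDerivAt_rpow_const (Or.inl (by linarith : (-x) ≠ 0))).comp x
          (hasDerivAt_neg x)
      have := h1.const_mul (1 / (α + 1))
      refine this.congr_deriv (Eq.symm ?_)
      rw [g_eq_nonpos hα0 hx.le]
      have : α + 1 - 1 = α := by ring
      rw [this]
      field_simp
    refine h.congr_of_eventuallyEq ?_
    filter_upwards [eventually_lt_nhds hx] with t ht
    rw [abs_of_neg ht]
  · -- at 0
    rw [hasDerivAt_iff_tendsto]
    have : (fun x' : ℝ => ‖x' - 0‖⁻¹ * ‖(1 / (α + 1)) * |x'| ^ (α + 1) - (1 / (α + 1)) * |0| ^ (α + 1) - (x' - 0) • (|0| ^ (α - 1) * 0)‖)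
        = fun x' : ℝ => (1 / (α + 1)) * |x'| ^ α := by
      funext t
      rcases eq_or_ne t 0 with rfl | ht
      · simp [Real.zero_rpow hα0.ne', Real.zero_rpow hα1.ne']
      · simp only [sub_zero, smul_zero, mul_zero, abs_zero, Real.zero_rpow hα1.ne']
        rw [Real.norm_eq_abs, Real.norm_eq_abs]
        rw [abs_mul, abs_of_pos (by positivity : (0:ℝ) < 1 / (α+1)),
          Real.abs_rpow_of_nonneg (abs_nonneg t)]
        rw [abs_abs, Real.rpow_add_one (abs_ne_zero.2 ht)]
        field_simp
    rw [this]
    have h0 : ContinuousAt (fun t : ℝ => (1 / (α + 1)) * |t| ^ α) 0 := by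
      apply ContinuousAt.mul continuousAt_const
      exact (Real.continuousAt_rpow_const _ _ (Or.inr hα0.le)).comp continuous_abs.continuousAt
    have := h0.tendsto
    simpa [Real.zero_rpow hα0.ne'] using this
  · have h : HasDerivAt (fun t : ℝ => (1 / (α + 1)) * t ^ (α + 1))
        (|x| ^ (α - 1) * x) x := by
      have h1 : HasDerivAt (fun t : ℝ => t ^ (α + 1))
          ((α + 1) * x ^ (α + 1 - 1)) x :=
        Real.hasDerivAt_rpow_const (Or.inl hx.ne')
      have := h1.const_mul (1 / (α + 1))
      refine this.congr_deriv (Eq.symm ?_)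
      rw [g_eq_nonneg hα0 hx.le]
      have e : α + 1 - 1 = α := by ring
      rw [e]
      field_simp
    refine h.congr_of_eventuallyEq ?_
    filter_upwards [eventually_gt_nhds hx] with t ht
    rw [abs_of_pos ht]

theorem bregman_le_diff_pow (α : ℝ) (hα0 : 0 < α) (hα1 : α < 1) :
    ∃ c : ℝ, 0 < c ∧ ∀ v w : ℝ,
      (1 / (α + 1)) * (|w| ^ (α + 1) - |v| ^ (α + 1)) +
          (|v| ^ (α - 1) * v) * (v - w) ≤
        c * |v - w| ^ (1 + α) := by
  refine ⟨2, by norm_num, fun v w => ?_⟩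
  set F : ℝ → ℝ := fun t => (1 / (α + 1)) * |t| ^ (α + 1) with hF
  set g : ℝ → ℝ := fun t => |t| ^ (α - 1) * t with hg
  have hLHS : (1 / (α + 1)) * (|w| ^ (α + 1) - |v| ^ (α + 1)) +
      (|v| ^ (α - 1) * v) * (v - w) = F w - F v - g v * (w - v) := by
    simp only [hF, hg]; ring
  rw [hLHS]
  have hderiv : ∀ x, HasDerivAt F (g x) x := F_deriv hα0
  have hcont : Continuous F := by
    have : Differentiable ℝ F := fun x => (hderiv x).differentiableAt
    exact this.continuous
  have hα1' : (0:ℝ) < 1 + α := by linarith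
  rcases lt_trichotomy v w with hvw | rfl | hvw
  · obtain ⟨ξ, hξ, hslope⟩ := exists_hasDerivAt_eq_slope F g hvw
      (hcont.continuousOn) (fun x _ => hderiv x)
    have hne : w - v ≠ 0 := by intro h; linarith [sub_eq_zero.1 h]
    have hFw : F w - F v = g ξ * (w - v) := by
      field_simp at hslope; linarith [hslope]
    rw [hFw]
    have key : g ξ - g v ≤ 2 * (ξ - v) ^ α := g_holder hα0 hα1 hξ.1.le
    have h2 : (ξ - v) ^ α ≤ (w - v) ^ α :=
      Real.rpow_le_rpow (by linarith [hξ.1]) (by linarith [hξ.2]) hα0.le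
    have habs : |v - w| = w - v := by rw [abs_sub_comm]; exact abs_of_pos (by linarith)
    rw [habs]
    have e : (w - v) ^ (1 + α) = (w - v) * (w - v) ^ α := by
      rw [add_comm, Real.rpow_add_one (by positivity : (w - v) ≠ 0)]; ring
    rw [e]
    have hwv : (0:ℝ) < w - v := by linarith
    calc g ξ * (w - v) - g v * (w - v) = (g ξ - g v) * (w - v) := by ring
      _ ≤ (2 * (w - v) ^ α) * (w - v) := by
          apply mul_le_mul_of_nonneg_right _ hwv.le
          linarith
      _ = 2 * ((w - v) * (w - v) ^ α) := by ring
  · simp [Real.zero_rpow hα1'.ne']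
  · obtain ⟨ξ, hξ, hslope⟩ := exists_hasDerivAt_eq_slope F g hvw
      (hcont.continuousOn) (fun x _ => hderiv x)
    have hvw' : (0:ℝ) < v - w := by linarith
    have hFw : F v - F w = g ξ * (v - w) := by
      field_simp at hslope; linarith [hslope]
    have key : g v - g ξ ≤ 2 * (v - ξ) ^ α := g_holder hα0 hα1 hξ.2.le
    have h2 : (v - ξ) ^ α ≤ (v - w) ^ α :=
      Real.rpow_le_rpow (by linarith [hξ.2]) (by linarith [hξ.1]) hα0.le
    have habs : |v - w| = v - w := abs_of_pos hvw'
    rw [habs]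
    have e : (v - w) ^ (1 + α) = (v - w) * (v - w) ^ α := by
      rw [add_comm, Real.rpow_add_one hvw'.ne']; ring
    rw [e]
    calc F w - F v - g v * (w - v) = (g v - g ξ) * (v - w) := by
          have : F w - F v = -(F v - F w) := by ring
          rw [this, hFw]; ring
      _ ≤ (2 * (v - w) ^ α) * (v - w) := by
          apply mul_le_mul_of_nonneg_right _ hvw'.le
          linarith
      _ = 2 * ((v - w) * (v - w) ^ α) := by ring
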